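/- Let $m$ be a squarefree positive integer, $K = \mathbb{Q}(\sqrt{-m})$ with ring of integers $\mathcal{O}$, and let $p$ be an odd prime. Let $v, n$ be nonzero integers and $\epsilon \in K^*$. Let $\mathfrak{q}$ be a nonzero prime ideal of $\mathcal{O}$, and write $\mathrm{ord}_\mathfrak{q}$ for the $\mathfrak{q}$-adic valuation on $K^*$. Suppose one of the following holds: (i) $\mathrm{ord}_\mathfrak{q}(v)$, $\mathrm{ord}_\mathfrak{q}(n\sqrt{-m})$, $\mathrm{ord}_\mathfrak{q}(\epsilon)$ are pairwise distinct modulo $p$; (ii) $\mathrm{ord}_\mathfrak{q}(2v)$, $\mathrm{ord}_\mathfrak{q}(\epsilon)$, $\mathrm{ord}_\mathfrak{q}(\overline{\epsilon})$ are pairwise distinct modulo $p$; (iii) $\mathrm{ord}_\mathfrak{q}(2n\sqrt{-m})$, $\mathrm{ord}_\mathfrak{q}(\epsilon)$, $\mathrm{ord}_\mathfrak{q}(\overline{\epsilon})$ are pairwise distinct modulo $p$. Then there is no nonzero integer $\sigma$ and no $\eta \in K^*$ satisfying $v\sigma^p + n\sqrt{-m} = \epsilon\eta^p$. -/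

import Mathlib

open IsDedekindDomain

open scoped Classical

/-- The `𝔮`-adic valuation (normalized additively, as an integer) of a nonzero
element of a number field `K`; we set it to `0` at `x = 0`. -/
noncomputable def ordAt {K : Type*} [Field K] [NumberField K]
    (𝔮 : HeightOneSpectrum (NumberField.RingOfIntegers K)) (x : K) : ℤ :=
  if hx : x = 0 then 0
  else - Multiplicative.toAdd (WithZero.unzero (((𝔮.valuation K).ne_zero_iff).mpr hx))

section aux

variable {K : Type*} [Field K] [NumberField K]
  (𝔮 : HeightOneSpectrum (NumberField.RingOfIntegers K))

lemma unzero_eq_of_eq {a b : WithZero (Multiplicative ℤ)} (ha : a ≠ 0) (hb : b ≠ 0) (h : a = b) :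
    WithZero.unzero ha = WithZero.unzero hb := by subst h; rfl

lemma ordAt_eq_of_val_eq {x y : K} (hx : x ≠ 0) (hy : y ≠ 0)
    (h : (𝔮.valuation K) x = (𝔮.valuation K) y) : ordAt 𝔮 x = ordAt 𝔮 y := by
  rw [ordAt, dif_neg hx, ordAt, dif_neg hy,
    unzero_eq_of_eq (((𝔮.valuation K).ne_zero_iff).mpr hx) (((𝔮.valuation K).ne_zero_iff).mpr hy) h]

lemma ordAt_mul {x y : K} (hx : x ≠ 0) (hy : y ≠ 0) :
    ordAt 𝔮 (x * y) = ordAt 𝔮 x + ordAt 𝔮 y := by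
  have hxy : x * y ≠ 0 := mul_ne_zero hx hy
  rw [ordAt, dif_neg hxy, ordAt, dif_neg hx, ordAt, dif_neg hy]
  have h1 : (𝔮.valuation K) (x * y) = (𝔮.valuation K) x * (𝔮.valuation K) y := map_mul _ _ _
  have h2 : (𝔮.valuation K) x * (𝔮.valuation K) y ≠ 0 :=
    h1 ▸ ((𝔮.valuation K).ne_zero_iff).mpr hxy
  rw [unzero_eq_of_eq _ h2 h1, WithZero.unzero_mul h2, toAdd_mul, neg_add]

lemma ordAt_neg (x : K) : ordAt 𝔮 (-x) = ordAt 𝔮 x := by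
  by_cases hx : x = 0
  · simp [hx]
  · exact ordAt_eq_of_val_eq 𝔮 (neg_ne_zero.mpr hx) hx (Valuation.map_neg _ _)

lemma ordAt_pow {x : K} (hx : x ≠ 0) (k : ℕ) :
    ordAt 𝔮 (x ^ k) = k * ordAt 𝔮 x := by
  induction k with
  | zero =>
      simp only [pow_zero, Nat.cast_zero, zero_mul]
      rw [ordAt, dif_neg (one_ne_zero : (1:K) ≠ 0)]
      have h1 : WithZero.unzero (((𝔮.valuation K).ne_zero_iff).mpr (one_ne_zero : (1:K) ≠ 0)) = 1 := by
        rw [← WithZero.coe_inj, WithZero.coe_unzero, map_one, WithZero.coe_one]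
      rw [h1]; rfl
  | succ k ih =>
      rw [pow_succ, ordAt_mul 𝔮 (pow_ne_zero _ hx) hx, ih]
      push_cast; ring

lemma ordAt_three {a b c : K} (ha : a ≠ 0) (hb : b ≠ 0) (hc : c ≠ 0)
    (habc : a + b + c = 0) :
    ordAt 𝔮 a = ordAt 𝔮 b ∨ ordAt 𝔮 a = ordAt 𝔮 c ∨ ordAt 𝔮 b = ordAt 𝔮 c := by
  by_cases hab : (𝔮.valuation K) a = (𝔮.valuation K) b
  · exact Or.inl (ordAt_eq_of_val_eq 𝔮 ha hb hab)
  have hc' : c = -(a + b) := by linear_combination habc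
  have h2 : (𝔮.valuation K) c = max ((𝔮.valuation K) a) ((𝔮.valuation K) b) := by
    rw [hc', Valuation.map_neg, Valuation.map_add_of_distinct_val _ hab]
  rcases max_cases ((𝔮.valuation K) a) ((𝔮.valuation K) b) with ⟨hmax, _⟩ | ⟨hmax, _⟩
  · exact Or.inr (Or.inl (ordAt_eq_of_val_eq 𝔮 ha hc (h2.trans hmax).symm))
  · exact Or.inr (Or.inr (ordAt_eq_of_val_eq 𝔮 hb hc (h2.trans hmax).symm))

end aux

theorem valuative_criterion
    (m : ℕ) (hm : 0 < m) (hmsq : Squarefree m)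
    (K : Type) [Field K] [NumberField K] (hdeg : Module.finrank ℚ K = 2)
    (s : K) (hs : s ^ 2 = -(m : K))
    (conj : K ≃ₐ[ℚ] K) (hconj : conj s = -s)
    (p : ℕ) (hp : p.Prime) (hpodd : Odd p)
    (v n : ℤ) (hv : v ≠ 0) (hn : n ≠ 0)
    (ε : K) (hε : ε ≠ 0)
    (𝔮 : HeightOneSpectrum (NumberField.RingOfIntegers K))
    (h : -- (i)
      ((ordAt 𝔮 (v : K) : ZMod p) ≠ (ordAt 𝔮 ((n : K) * s) : ZMod p) ∧
       (ordAt 𝔮 (v : K) : ZMod p) ≠ (ordAt 𝔮 ε : ZMod p) ∧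
       (ordAt 𝔮 ((n : K) * s) : ZMod p) ≠ (ordAt 𝔮 ε : ZMod p)) ∨
      -- (ii)
      ((ordAt 𝔮 ((2 * v : ℤ) : K) : ZMod p) ≠ (ordAt 𝔮 ε : ZMod p) ∧
       (ordAt 𝔮 ((2 * v : ℤ) : K) : ZMod p) ≠ (ordAt 𝔮 (conj ε) : ZMod p) ∧
       (ordAt 𝔮 ε : ZMod p) ≠ (ordAt 𝔮 (conj ε) : ZMod p)) ∨
      -- (iii)
      ((ordAt 𝔮 (2 * (n : K) * s) : ZMod p) ≠ (ordAt 𝔮 ε : ZMod p) ∧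
       (ordAt 𝔮 (2 * (n : K) * s) : ZMod p) ≠ (ordAt 𝔮 (conj ε) : ZMod p) ∧
       (ordAt 𝔮 ε : ZMod p) ≠ (ordAt 𝔮 (conj ε) : ZMod p))) :
    ¬ ∃ (σ : ℤ) (η : K), σ ≠ 0 ∧ η ≠ 0 ∧
      (v : K) * (σ : K) ^ p + (n : K) * s = ε * η ^ p := by
  rintro ⟨σ, η, hσ, hη, heq⟩
  have hv' : (v : K) ≠ 0 := Int.cast_ne_zero.mpr hv
  have hn' : (n : K) ≠ 0 := Int.cast_ne_zero.mpr hn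
  have hσ' : (σ : K) ≠ 0 := Int.cast_ne_zero.mpr hσ
  have hm' : ((m : K)) ≠ 0 := Nat.cast_ne_zero.mpr hm.ne'
  have hs0 : s ≠ 0 := by
    intro h0
    apply hm'
    have h1 : (0 : K) ^ 2 = -(m : K) := h0 ▸ hs
    rw [zero_pow two_ne_zero] at h1
    rw [← neg_eq_zero]
    exact h1.symm
  have h2K : (2 : K) ≠ 0 := two_ne_zero
  have hσp : (σ : K) ^ p ≠ 0 := pow_ne_zero _ hσ'
  have hηp : η ^ p ≠ 0 := pow_ne_zero _ hη
  have hconjε : conj ε ≠ 0 := fun h0 => hε (by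
    have := congrArg conj.symm h0
    rwa [conj.symm_apply_apply, map_zero] at this)
  have hconjη : conj η ≠ 0 := fun h0 => hη (by
    have := congrArg conj.symm h0
    rwa [conj.symm_apply_apply, map_zero] at this)
  have hconjηp : (conj η) ^ p ≠ 0 := pow_ne_zero _ hconjη
  have heq2 : (v : K) * (σ : K) ^ p - (n : K) * s = conj ε * (conj η) ^ p := by
    have := congrArg conj heq
    simp only [map_add, map_mul, map_pow, map_intCast, hconj, mul_neg] at this
    linear_combination this
  have key : ∀ (x y : K), x ≠ 0 → y ≠ 0 →
      ((ordAt 𝔮 (x * y ^ p) : ZMod p)) = ((ordAt 𝔮 x : ZMod p)) := by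
    intro x y hx hy
    rw [ordAt_mul 𝔮 hx (pow_ne_zero _ hy), ordAt_pow 𝔮 hy p]
    push_cast
    simp [ZMod.natCast_self]
  have keyneg : ∀ (x y : K), x ≠ 0 → y ≠ 0 →
      ((ordAt 𝔮 (-(x * y ^ p)) : ZMod p)) = ((ordAt 𝔮 x : ZMod p)) := by
    intro x y hx hy
    rw [ordAt_neg]
    exact key x y hx hy
  have key2 : ∀ {a b : ℤ}, a = b → (a : ZMod p) = (b : ZMod p) := fun h => by rw [h]
  rcases h with ⟨h1, h2, h3⟩ | ⟨h1, h2, h3⟩ | ⟨h1, h2, h3⟩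
  · have habc : (v : K) * (σ : K) ^ p + (n : K) * s + (-(ε * η ^ p)) = 0 := by
      linear_combination heq
    rcases ordAt_three 𝔮 (mul_ne_zero hv' hσp) (mul_ne_zero hn' hs0)
        (neg_ne_zero.mpr (mul_ne_zero hε hηp)) habc with he | he | he
    · exact h1 ((key _ _ hv' hσ').symm.trans (key2 he))
    · exact h2 ((key _ _ hv' hσ').symm.trans ((key2 he).trans (keyneg _ _ hε hη)))
    · exact h3 ((key2 he).trans (keyneg _ _ hε hη))
  · have h2v : ((2 * v : ℤ) : K) ≠ 0 := Int.cast_ne_zero.mpr (mul_ne_zero two_ne_zero hv)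
    have habc : ((2 * v : ℤ) : K) * (σ : K) ^ p + (-(ε * η ^ p))
        + (-(conj ε * (conj η) ^ p)) = 0 := by
      push_cast
      linear_combination heq + heq2
    rcases ordAt_three 𝔮 (mul_ne_zero h2v hσp) (neg_ne_zero.mpr (mul_ne_zero hε hηp))
        (neg_ne_zero.mpr (mul_ne_zero hconjε hconjηp)) habc with he | he | he
    · exact h1 ((key _ _ h2v hσ').symm.trans ((key2 he).trans (keyneg _ _ hε hη)))
    · exact h2 ((key _ _ h2v hσ').symm.trans ((key2 he).trans (keyneg _ _ hconjε hconjη)))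
    · exact h3 ((keyneg _ _ hε hη).symm.trans ((key2 he).trans (keyneg _ _ hconjε hconjη)))
  · have habc : 2 * (n : K) * s + (-(ε * η ^ p)) + (conj ε * (conj η) ^ p) = 0 := by
      linear_combination heq - heq2
    rcases ordAt_three 𝔮 (mul_ne_zero (mul_ne_zero h2K hn') hs0)
        (neg_ne_zero.mpr (mul_ne_zero hε hηp)) (mul_ne_zero hconjε hconjηp) habc
        with he | he | he
    · exact h1 ((key2 he).trans (keyneg _ _ hε hη))
    · exact h2 ((key2 he).trans (key _ _ hconjε hconjη))
    · exact h3 ((keyneg _ _ hε hη).symm.trans ((key2 he).trans (key _ _ hconjε hconjη)))
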